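/- Let Y and Z be bounded metric spaces with Z subextreme with respect to Y, i.e. d_GH(Y,Z) > 0 and 2·d_GH(Y,Z) = diam Z − diam Y. Fix ε ∈ (0, diam Z − diam Y) and let R be a correspondence between Y and Z with dis R ≤ 2·d_GH(Y,Z) + 2ε. Then for every t ∈ [0,1], the space R_t (the set R with the metric |(y,z),(y',z')|_t = (1−t)·d(y,y') + t·d(z,z'), with R_0 = Y, R_1 = Z) satisfies diam R_t ≥ (1−t)·diam Y + t·diam Z − 4ε. -/

import Mathlib

open Metric Set
open scoped ENNReal

/-- A correspondence between `X` and `Y`: a relation whose projections are surjective. -/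
def IsCorrespondence {X Y : Type*} (R : Set (X × Y)) : Prop :=
  (∀ x : X, ∃ y : Y, (x, y) ∈ R) ∧ (∀ y : Y, ∃ x : X, (x, y) ∈ R)

/-- The distortion of a relation `R ⊆ X × Y`. -/
noncomputable def corrDistortion {X Y : Type*} [MetricSpace X] [MetricSpace Y]
    (R : Set (X × Y)) : ℝ≥0∞ :=
  ⨆ p ∈ R, ⨆ q ∈ R, ENNReal.ofReal |dist p.1 q.1 - dist p.2 q.2|

/-- The Gromov–Hausdorff distance between (arbitrary) metric spaces:
half the infimum of distortions of correspondences. -/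
noncomputable def ghDist (X Y : Type*) [MetricSpace X] [MetricSpace Y] : ℝ≥0∞ :=
  (⨅ (R : Set (X × Y)) (_ : IsCorrespondence R), corrDistortion R) / 2

noncomputable def interpMetric {Y Z : Type*} [MetricSpace Y] [MetricSpace Z]
    (R : Set (Y × Z)) (t : ℝ) (h0 : 0 ≤ t) (h1 : t ≤ 1) : PseudoMetricSpace ↥R where
  dist p q := (1 - t) * dist p.val.1 q.val.1 + t * dist p.val.2 q.val.2
  dist_self p := by simp
  dist_comm p q := by
    show (1 - t) * dist p.val.1 q.val.1 + t * dist p.val.2 q.val.2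
        = (1 - t) * dist q.val.1 p.val.1 + t * dist q.val.2 p.val.2
    rw [dist_comm p.val.1, dist_comm p.val.2]
  dist_triangle p q r := by
    show (1 - t) * dist p.val.1 r.val.1 + t * dist p.val.2 r.val.2
        ≤ ((1 - t) * dist p.val.1 q.val.1 + t * dist p.val.2 q.val.2)
          + ((1 - t) * dist q.val.1 r.val.1 + t * dist q.val.2 r.val.2)
    have h1' : dist p.val.1 r.val.1 ≤ dist p.val.1 q.val.1 + dist q.val.1 r.val.1 :=
      dist_triangle _ _ _
    have h2' : dist p.val.2 r.val.2 ≤ dist p.val.2 q.val.2 + dist q.val.2 r.val.2 :=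
      dist_triangle _ _ _
    nlinarith

/-- if `Z` is subextreme with respect to `Y` and `R` is a correspondence
with `dis R ≤ 2·d_GH(Y,Z) + 2ε`, where `0 < ε < diam Z − diam Y`, then the interpolated
(pseudo)metric spaces `R_t`, `t ∈ [0,1]`, satisfy
`diam R_t ≥ (1−t)·diam Y + t·diam Z − 4ε`. -/
theorem stmt10 {Y Z : Type*} [MetricSpace Y] [MetricSpace Z] [Nonempty Y] [Nonempty Z]
    (hYb : EMetric.diam (Set.univ : Set Y) ≠ ⊤)
    (hZb : EMetric.diam (Set.univ : Set Z) ≠ ⊤)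
    (hpos : 0 < ghDist Y Z)
    (hsub : 2 * ghDist Y Z =
      ENNReal.ofReal (Metric.diam (Set.univ : Set Z) - Metric.diam (Set.univ : Set Y)))
    (ε : ℝ) (hε0 : 0 < ε)
    (hεlt : ε < Metric.diam (Set.univ : Set Z) - Metric.diam (Set.univ : Set Y))
    (R : Set (Y × Z)) (hR : IsCorrespondence R)
    (hdis : corrDistortion R ≤ 2 * ghDist Y Z + ENNReal.ofReal (2 * ε)) :
    ∃ M : ∀ t : ℝ, t ∈ Set.Icc (0 : ℝ) 1 → PseudoMetricSpace ↥R,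
      (∀ t ht, ∀ p q : ↥R, @dist ↥R (M t ht).toDist p q
          = (1 - t) * dist p.val.1 q.val.1 + t * dist p.val.2 q.val.2) ∧
      (∀ t ht, (1 - t) * Metric.diam (Set.univ : Set Y)
            + t * Metric.diam (Set.univ : Set Z) - 4 * ε
          ≤ @Metric.diam ↥R (M t ht) Set.univ) := by
  set dY := Metric.diam (Set.univ : Set Y) with hdY
  set dZ := Metric.diam (Set.univ : Set Z) with hdZ
  have hYbd : Bornology.IsBounded (Set.univ : Set Y) :=
    Metric.isBounded_iff_ediam_ne_top.2 hYb
  have hZbd : Bornology.IsBounded (Set.univ : Set Z) :=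
    Metric.isBounded_iff_ediam_ne_top.2 hZb
  have hdY0 : 0 ≤ dY := Metric.diam_nonneg
  have hdZ0 : 0 ≤ dZ := Metric.diam_nonneg
  -- distortion bound in real terms
  have hkey : ∀ p ∈ R, ∀ q ∈ R,
      |dist p.1 q.1 - dist p.2 q.2| ≤ (dZ - dY) + 2 * ε := by
    intro p hp q hq
    have h1 : ENNReal.ofReal |dist p.1 q.1 - dist p.2 q.2| ≤ corrDistortion R := by
      refine le_trans ?_ (le_iSup₂ (f := fun p (_ : p ∈ R) =>
        ⨆ q ∈ R, ENNReal.ofReal |dist p.1 q.1 - dist p.2 q.2|) p hp)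
      exact le_iSup₂ (f := fun q (_ : q ∈ R) =>
        ENNReal.ofReal |dist p.1 q.1 - dist p.2 q.2|) q hq
    have h2 : corrDistortion R ≤ ENNReal.ofReal ((dZ - dY) + 2 * ε) := by
      rw [ENNReal.ofReal_add (by linarith) (by linarith)]
      exact hdis.trans (by rw [hsub])
    have := h1.trans h2
    rwa [ENNReal.ofReal_le_ofReal_iff (by linarith)] at this
  refine ⟨fun t ht => interpMetric R t ht.1 ht.2, fun t ht p q => rfl, ?_⟩
  intro t ht
  obtain ⟨ht0, ht1⟩ := ht
  -- find far-apart points in Z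
  obtain ⟨z, z', hzz⟩ : ∃ z z' : Z, dZ - ε < dist z z' := by
    by_contra h
    push_neg at h
    have : dZ ≤ dZ - ε :=
      Metric.diam_le_of_forall_dist_le (by linarith) (fun x _ y _ => h x y)
    linarith
  obtain ⟨y, hy⟩ := hR.2 z
  obtain ⟨y', hy'⟩ := hR.2 z'
  have hzZ : dist z z' ≤ dZ := Metric.dist_le_diam_of_mem hZbd trivial trivial
  have hyY : dist y y' ≤ dY := Metric.dist_le_diam_of_mem hYbd trivial trivial
  have hk := hkey (y, z) hy (y', z') hy'
  simp only [abs_le] at hk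
  have hyy : dY - 3 * ε < dist y y' := by
    have := hk.2
    linarith
  -- the two points in R
  letI m := interpMetric R t ht0 ht1
  set P : ↥R := ⟨(y, z), hy⟩
  set Q : ↥R := ⟨(y', z'), hy'⟩
  have hbd : @Bornology.IsBounded ↥R m.toBornology (Set.univ : Set ↥R) := by
    rw [@Metric.isBounded_iff]
    refine ⟨dY + dZ, fun p _ q _ => ?_⟩
    show (1 - t) * dist p.val.1 q.val.1 + t * dist p.val.2 q.val.2 ≤ dY + dZ
    have h1 : dist p.val.1 q.val.1 ≤ dY := Metric.dist_le_diam_of_mem hYbd trivial trivial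
    have h2 : dist p.val.2 q.val.2 ≤ dZ := Metric.dist_le_diam_of_mem hZbd trivial trivial
    nlinarith
  have hPQ : @dist ↥R m.toDist P Q ≤ @Metric.diam ↥R m Set.univ :=
    @Metric.dist_le_diam_of_mem ↥R _ _ _ m hbd trivial trivial
  have hd : (1 - t) * dY + t * dZ - 4 * ε ≤ @dist ↥R m.toDist P Q := by
    show (1 - t) * dY + t * dZ - 4 * ε
        ≤ (1 - t) * dist P.val.1 Q.val.1 + t * dist P.val.2 Q.val.2
    simp only [P, Q]
    nlinarith
  exact hd.trans hPQ
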